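/- Equality in the binomial Poincaré inequality ∑_k b_{n,t}(k)f(k)² ≤ nt(1-t)∑_k b_{n,t}(k)(∇_n f(k))² (for f with ∑_k f(k)b_{n,t}(k) = 0) holds if and only if f is a linear combination of φ_1(k) = (k - nt)/(1-t) and φ_n(k) = n!·(−t/(1-t))^{n-k}. -/

import Mathlib

open Finset Polynomial

namespace Stmt16

/-- generating polynomial `(1+(1-t)w)^a (1-tw)^b` -/
noncomputable def Qp (t : ℝ) (a b : ℕ) : Polynomial ℝ :=
  (1 + (1 - C t) * X) ^ a * (1 - C t * X) ^ b

noncomputable def psi (n : ℕ) (t : ℝ) (r m : ℕ) : ℝ := (Qp t m (n - m)).coeff r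

lemma derivQp (t : ℝ) (a b : ℕ) :
    derivative (Qp t a b) =
      ((a : ℕ) : ℝ) • ((1 + (1 - C t) * X) ^ (a-1) * (1 - C t * X) ^ b * (1 - C t))
      - ((b : ℕ) : ℝ) • ((1 + (1 - C t) * X) ^ a * (1 - C t * X) ^ (b-1) * C t) := by
  simp only [Qp, derivative_mul, derivative_pow, derivative_add, derivative_one,
    derivative_sub, derivative_mul, derivative_C, derivative_X, zero_add, zero_sub,
    mul_one, zero_mul, smul_eq_C_mul]
  ring

lemma keyA (t : ℝ) (a b : ℕ) :
    ((a : ℝ) • (Qp t a b - Qp t (a-1) (b+1)) + (b : ℝ) • (Qp t (a+1) (b-1) - Qp t a b)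
      = X * (((a+b : ℕ) : ℝ) • Qp t a b) - X ^ 2 * derivative (Qp t a b)) := by
  rw [derivQp]
  rcases Nat.eq_zero_or_pos a with rfl | ha <;> rcases Nat.eq_zero_or_pos b with rfl | hb
  · simp [Qp]
  · obtain ⟨b', rfl⟩ : ∃ b', b = b' + 1 := ⟨b - 1, by omega⟩
    simp only [Qp, pow_succ, pow_zero, one_mul, mul_one, Nat.add_sub_cancel,
      smul_eq_C_mul, Nat.cast_zero, C_0, zero_mul, Nat.zero_sub, Nat.sub_zero, zero_add]
    push_cast
    simp only [map_add, map_one, map_natCast]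
    ring
  · obtain ⟨a', rfl⟩ : ∃ a', a = a' + 1 := ⟨a - 1, by omega⟩
    simp only [Qp, pow_succ, pow_zero, one_mul, mul_one, Nat.add_sub_cancel,
      smul_eq_C_mul, Nat.cast_zero, C_0, zero_mul, Nat.zero_sub, Nat.sub_zero, add_zero]
    push_cast
    simp only [map_add, map_one, map_natCast]
    ring
  · obtain ⟨a', rfl⟩ : ∃ a', a = a' + 1 := ⟨a - 1, by omega⟩
    obtain ⟨b', rfl⟩ : ∃ b', b = b' + 1 := ⟨b - 1, by omega⟩
    simp only [Qp, pow_succ, pow_zero, one_mul, mul_one, Nat.add_sub_cancel,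
      smul_eq_C_mul, Nat.cast_zero, C_0, zero_mul, Nat.zero_sub, Nat.sub_zero]
    push_cast
    simp only [map_add, map_one, map_natCast]
    ring

/-- Polynomial identity underlying `∇φ_r = μ_r φ_{r-1}`. -/
lemma polyA (n : ℕ) (t : ℝ) (m : ℕ) (hm : m ≤ n) :
    (m : ℝ) • (Qp t m (n - m) - Qp t (m-1) (n - (m-1)))
      + ((n - m : ℕ) : ℝ) • (Qp t (m+1) (n - (m+1)) - Qp t m (n - m))
    = X * ((n : ℝ) • Qp t m (n - m)) - X ^ 2 * derivative (Qp t m (n - m)) := by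
  rcases Nat.eq_zero_or_pos m with rfl | hm0
  · have := keyA t 0 n
    simpa using this
  · have h1 : n - (m-1) = (n - m) + 1 := by omega
    have h2 : n - (m+1) = (n - m) - 1 := by omega
    rw [h1, h2, show (n:ℝ) = ((m + (n-m) : ℕ) : ℝ) by norm_cast; omega]
    exact keyA t m (n - m)

lemma keyC (t : ℝ) (a b : ℕ) :
    (t*(1-t)*((a:ℝ)-b)) • Qp t a b - (t^2*(b:ℝ)) • Qp t (a+1) (b-1)
      + ((1-t)^2*(a:ℝ)) • Qp t (a-1) (b+1) = derivative (Qp t a b) := by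
  rw [derivQp]
  rcases Nat.eq_zero_or_pos a with rfl | ha <;> rcases Nat.eq_zero_or_pos b with rfl | hb
  · simp [Qp]
  · obtain ⟨b', rfl⟩ : ∃ b', b = b' + 1 := ⟨b - 1, by omega⟩
    simp only [Qp, pow_succ, pow_zero, one_mul, mul_one, Nat.add_sub_cancel,
      smul_eq_C_mul, Nat.cast_zero, C_0, zero_mul, Nat.zero_sub, Nat.sub_zero, zero_add]
    push_cast
    simp only [map_add, map_one, map_natCast, map_sub, map_mul, map_pow, map_neg, map_zero]
    ring
  · obtain ⟨a', rfl⟩ : ∃ a', a = a' + 1 := ⟨a - 1, by omega⟩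
    simp only [Qp, pow_succ, pow_zero, one_mul, mul_one, Nat.add_sub_cancel,
      smul_eq_C_mul, Nat.cast_zero, C_0, zero_mul, Nat.zero_sub, Nat.sub_zero, add_zero]
    push_cast
    simp only [map_add, map_one, map_natCast, map_sub, map_mul, map_pow, map_neg, map_zero]
    ring
  · obtain ⟨a', rfl⟩ : ∃ a', a = a' + 1 := ⟨a - 1, by omega⟩
    obtain ⟨b', rfl⟩ : ∃ b', b = b' + 1 := ⟨b - 1, by omega⟩
    simp only [Qp, pow_succ, pow_zero, one_mul, mul_one, Nat.add_sub_cancel,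
      smul_eq_C_mul, Nat.cast_zero, C_0, zero_mul, Nat.zero_sub, Nat.sub_zero]
    push_cast
    simp only [map_add, map_one, map_natCast, map_sub, map_mul, map_pow, map_neg, map_zero]
    ring

/-- Polynomial identity underlying the raising property of the adjoint. -/
lemma polyC (n : ℕ) (t : ℝ) (m : ℕ) (hm : m ≤ n) :
    (t*(1-t)*(2*(m:ℝ)-n)) • Qp t m (n-m) - (t^2*((n-m : ℕ):ℝ)) • Qp t (m+1) (n-(m+1))
      + ((1-t)^2*(m:ℝ)) • Qp t (m-1) (n-(m-1)) = derivative (Qp t m (n-m)) := by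
  rcases Nat.eq_zero_or_pos m with rfl | hm0
  · have := keyC t 0 n
    simp only [Nat.cast_zero, mul_zero, zero_smul, add_zero, zero_sub, Nat.sub_zero,
      Nat.zero_sub, zero_add] at this ⊢
    convert this using 4 <;> push_cast <;> ring
  · have h1 : n - (m-1) = (n - m) + 1 := by omega
    have h2 : n - (m+1) = (n - m) - 1 := by omega
    rw [h1, h2]
    have := keyC t m (n - m)
    simp only [smul_eq_C_mul, map_sub, map_mul, map_natCast, map_add, map_one, map_ofNat,
      map_pow] at this ⊢
    push_cast [Nat.cast_sub hm] at this ⊢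
    linear_combination this

lemma coeffA (n : ℕ) (t : ℝ) (m : ℕ) (hm : m ≤ n) (r : ℕ) :
    (m : ℝ) * (psi n t (r+1) m - psi n t (r+1) (m-1))
      + ((n - m : ℕ) : ℝ) * (psi n t (r+1) (m+1) - psi n t (r+1) m)
    = ((n : ℝ) - r) * psi n t r m := by
  have h := congrArg (fun p => p.coeff (r+1)) (polyA n t m hm)
  simp only [coeff_sub, coeff_add, coeff_smul, smul_eq_mul, coeff_X_mul] at h
  have h2 : (X^2 * derivative (Qp t m (n-m))).coeff (r+1) = (r:ℝ) * (Qp t m (n-m)).coeff r := by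
    cases r with
    | zero =>
      rw [sq, mul_assoc, coeff_X_mul, mul_coeff_zero, coeff_X_zero, zero_mul]
      simp
    | succ r' =>
      rw [show r'+1+1 = r'+1+2 - 1 from rfl, show r'+1+2-1 = r' + 2 from rfl,
        coeff_X_pow_mul, coeff_derivative]
      push_cast
      ring
  rw [h2] at h
  simp only [psi]
  rw [h]
  ring

lemma coeffC (n : ℕ) (t : ℝ) (m : ℕ) (hm : m ≤ n) (s : ℕ) :
    t*(1-t)*(2*(m:ℝ)-n) * psi n t s m - t^2*((n-m:ℕ):ℝ) * psi n t s (m+1)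
      + (1-t)^2*(m:ℝ) * psi n t s (m-1) = ((s+1 : ℕ) : ℝ) * psi n t (s+1) m := by
  have h := congrArg (fun p => p.coeff s) (polyC n t m hm)
  simp only [coeff_sub, coeff_add, coeff_smul, smul_eq_mul, coeff_derivative] at h
  simp only [psi]
  rw [h]
  push_cast
  ring

noncomputable def phi (n : ℕ) (t : ℝ) (r : ℕ) (k : ℤ) : ℝ :=
  if 0 ≤ k ∧ k ≤ (n:ℤ) then (Nat.factorial r : ℝ) / (1-t)^r * psi n t r k.toNat else 0

noncomputable def Dop (n : ℕ) (f : ℤ → ℝ) (k : ℤ) : ℝ :=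
  (k:ℝ)/(n:ℝ) * (f k - f (k-1)) + ((n:ℝ) - (k:ℝ))/(n:ℝ) * (f (k+1) - f k)

noncomputable def mu (n : ℕ) (t : ℝ) (r : ℕ) : ℝ := (r:ℝ) * ((n:ℝ) - r + 1) / ((n:ℝ) * (1-t))

lemma phi_nat (n : ℕ) (t : ℝ) (r : ℕ) (m : ℕ) (hm : m ≤ n) :
    phi n t r (m:ℤ) = (Nat.factorial r : ℝ) / (1-t)^r * psi n t r m := by
  rw [phi, if_pos ⟨by positivity, by exact_mod_cast hm⟩, Int.toNat_natCast]

lemma psi_zero (n : ℕ) (t : ℝ) (m : ℕ) : psi n t 0 m = 1 := by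
  simp [psi, Qp, coeff_zero_eq_eval_zero]

lemma phi_zero (n : ℕ) (t : ℝ) (m : ℕ) (hm : m ≤ n) : phi n t 0 (m:ℤ) = 1 := by
  simp [phi_nat n t 0 m hm, psi_zero]

lemma Dop_phi (n : ℕ) (t : ℝ) (hn : 1 ≤ n) (ht1 : t < 1) (r : ℕ) (k : ℤ)
    (hk : k ∈ Icc (0:ℤ) (n:ℤ)) :
    Dop n (phi n t (r+1)) k = mu n t (r+1) * phi n t r k := by
  simp only [mem_Icc] at hk
  obtain ⟨m, rfl⟩ : ∃ m:ℕ, k = (m:ℤ) := ⟨k.toNat, (Int.toNat_of_nonneg hk.1).symm⟩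
  have hmn : m ≤ n := by exact_mod_cast hk.2
  have hne : (1:ℝ) - t ≠ 0 := by intro h; nlinarith
  have hnne : (n:ℝ) ≠ 0 := by positivity
  set c : ℝ := (Nat.factorial (r+1) : ℝ) / (1-t)^(r+1) with hc
  have e1 : ((m:ℤ):ℝ)/(n:ℝ) * (phi n t (r+1) (m:ℤ) - phi n t (r+1) ((m:ℤ)-1))
      = (m:ℝ)/(n:ℝ) * (c * (psi n t (r+1) m - psi n t (r+1) (m-1))) := by
    rcases Nat.eq_zero_or_pos m with rfl | hm0
    · simp
    · obtain ⟨m', rfl⟩ : ∃ m', m = m' + 1 := ⟨m - 1, by omega⟩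
      have h1 : ((m'+1:ℕ):ℤ) - 1 = (m' : ℤ) := by push_cast; ring
      rw [h1, phi_nat n t (r+1) (m'+1) hmn, phi_nat n t (r+1) m' (by omega),
        show m' + 1 - 1 = m' from rfl]
      push_cast
      ring
  have e2 : ((n:ℝ) - ((m:ℤ):ℝ))/(n:ℝ) * (phi n t (r+1) ((m:ℤ)+1) - phi n t (r+1) (m:ℤ))
      = ((n-m:ℕ):ℝ)/(n:ℝ) * (c * (psi n t (r+1) (m+1) - psi n t (r+1) m)) := by
    rcases eq_or_lt_of_le hmn with rfl | hlt
    · simp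
    · have h1 : ((m:ℕ):ℤ) + 1 = ((m+1:ℕ):ℤ) := by push_cast; ring
      rw [h1, phi_nat n t (r+1) (m+1) (by omega), phi_nat n t (r+1) m hmn,
        Nat.cast_sub hmn]
      push_cast
      ring
  rw [Dop, e1, e2, phi_nat n t r m hmn]
  have key := coeffA n t m hmn r
  have expand : (m:ℝ)/(n:ℝ) * (c * (psi n t (r+1) m - psi n t (r+1) (m-1)))
      + ((n-m:ℕ):ℝ)/(n:ℝ) * (c * (psi n t (r+1) (m+1) - psi n t (r+1) m))
      = c/(n:ℝ) * ((m:ℝ) * (psi n t (r+1) m - psi n t (r+1) (m-1))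
        + ((n-m:ℕ):ℝ) * (psi n t (r+1) (m+1) - psi n t (r+1) m)) := by ring
  rw [expand, key, hc, mu, Nat.factorial_succ]
  push_cast
  field_simp
  ring

lemma Dop_phi_zero (n : ℕ) (t : ℝ) (hn : 1 ≤ n) (k : ℤ)
    (hk : k ∈ Icc (0:ℤ) (n:ℤ)) : Dop n (phi n t 0) k = 0 := by
  simp only [mem_Icc] at hk
  obtain ⟨m, rfl⟩ : ∃ m:ℕ, k = (m:ℤ) := ⟨k.toNat, (Int.toNat_of_nonneg hk.1).symm⟩
  have hmn : m ≤ n := by exact_mod_cast hk.2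
  rw [Dop]
  have e1 : ((m:ℤ):ℝ)/(n:ℝ) * (phi n t 0 (m:ℤ) - phi n t 0 ((m:ℤ)-1)) = 0 := by
    rcases Nat.eq_zero_or_pos m with rfl | hm0
    · simp
    · obtain ⟨m', rfl⟩ : ∃ m', m = m' + 1 := ⟨m - 1, by omega⟩
      have h1 : ((m'+1:ℕ):ℤ) - 1 = (m' : ℤ) := by push_cast; ring
      rw [h1, phi_zero n t (m'+1) hmn, phi_zero n t m' (by omega)]
      ring
  have e2 : ((n:ℝ) - ((m:ℤ):ℝ))/(n:ℝ) * (phi n t 0 ((m:ℤ)+1) - phi n t 0 (m:ℤ)) = 0 := by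
    rcases eq_or_lt_of_le hmn with rfl | hlt
    · simp
    · have h1 : ((m:ℕ):ℤ) + 1 = ((m+1:ℕ):ℤ) := by push_cast; ring
      rw [h1, phi_zero n t (m+1) (by omega), phi_zero n t m hmn]
      ring
  rw [e1, e2, add_zero]

lemma adj_phi (n : ℕ) (t : ℝ) (hn : 1 ≤ n) (ht0 : 0 < t) (ht1 : t < 1) (s : ℕ) (k : ℤ)
    (hk : k ∈ Icc (0:ℤ) (n:ℤ)) :
    (2*(k:ℝ)-(n:ℝ))/(n:ℝ) * phi n t s k
      - ((n:ℝ)-(k:ℝ))/(n:ℝ) * (t/(1-t)) * phi n t s (k+1)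
      + (k:ℝ)/(n:ℝ) * ((1-t)/t) * phi n t s (k-1)
    = phi n t (s+1) k / ((n:ℝ)*t) := by
  simp only [mem_Icc] at hk
  obtain ⟨m, rfl⟩ : ∃ m:ℕ, k = (m:ℤ) := ⟨k.toNat, (Int.toNat_of_nonneg hk.1).symm⟩
  have hmn : m ≤ n := by exact_mod_cast hk.2
  have hne : (1:ℝ) - t ≠ 0 := by intro h; nlinarith
  have hnne : (n:ℝ) ≠ 0 := by positivity
  set c : ℝ := (Nat.factorial s : ℝ) / (1-t)^s with hc
  have e2 : ((n:ℝ) - ((m:ℤ):ℝ))/(n:ℝ) * (t/(1-t)) * phi n t s ((m:ℤ)+1)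
      = ((n-m:ℕ):ℝ)/(n:ℝ) * (t/(1-t)) * (c * psi n t s (m+1)) := by
    rcases eq_or_lt_of_le hmn with rfl | hlt
    · simp
    · have h1 : ((m:ℕ):ℤ) + 1 = ((m+1:ℕ):ℤ) := by push_cast; ring
      rw [h1, phi_nat n t s (m+1) (by omega), Nat.cast_sub hmn]
      push_cast
      ring
  have e1 : ((m:ℤ):ℝ)/(n:ℝ) * ((1-t)/t) * phi n t s ((m:ℤ)-1)
      = (m:ℝ)/(n:ℝ) * ((1-t)/t) * (c * psi n t s (m-1)) := by
    rcases Nat.eq_zero_or_pos m with rfl | hm0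
    · simp
    · obtain ⟨m', rfl⟩ : ∃ m', m = m' + 1 := ⟨m - 1, by omega⟩
      have h1 : ((m'+1:ℕ):ℤ) - 1 = (m' : ℤ) := by push_cast; ring
      rw [h1, phi_nat n t s m' (by omega), show m' + 1 - 1 = m' from rfl]
      push_cast
      ring
  rw [e1, e2, phi_nat n t s m hmn, phi_nat n t (s+1) m hmn]
  have key := coeffC n t m hmn s
  have hT : t ≠ 0 := ne_of_gt ht0
  have h1t : (0:ℝ) < 1 - t := by linarith
  rw [hc, Nat.factorial_succ, pow_succ]
  push_cast [Nat.cast_sub hmn] at key ⊢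
  field_simp
  linear_combination key


end Stmt16

open Finset in
/-- The binomial mass function `b_{n,t}` on `ℤ`, supported on `{0,...,n}`. -/
noncomputable def binom (n : ℕ) (t : ℝ) (k : ℤ) : ℝ :=
  if 0 ≤ k ∧ k ≤ (n : ℤ) then (n.choose k.toNat : ℝ) * t ^ k.toNat * (1 - t) ^ (n - k.toNat)
  else 0

namespace Stmt16

noncomputable def ip (n : ℕ) (t : ℝ) (f g : ℤ → ℝ) : ℝ :=
  ∑ k ∈ Icc (0:ℤ) (n:ℤ), binom n t k * f k * g k

lemma binom_nat (n : ℕ) (t : ℝ) (m : ℕ) (hm : m ≤ n) :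
    binom n t (m:ℤ) = (n.choose m : ℝ) * t ^ m * (1 - t) ^ (n - m) := by
  rw [binom, if_pos ⟨by positivity, by exact_mod_cast hm⟩, Int.toNat_natCast]

lemma binom_outside (n : ℕ) (t : ℝ) (k : ℤ) (h : ¬(0 ≤ k ∧ k ≤ (n:ℤ))) :
    binom n t k = 0 := if_neg h

lemma binom_pos (n : ℕ) (t : ℝ) (ht0 : 0 < t) (ht1 : t < 1) (m : ℕ) (hm : m ≤ n) :
    0 < binom n t (m:ℤ) := by
  rw [binom_nat n t m hm]
  have := Nat.choose_pos hm
  have h1t : (0:ℝ) < 1 - t := by linarith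
  positivity

lemma binom_nonneg (n : ℕ) (t : ℝ) (ht0 : 0 < t) (ht1 : t < 1) (k : ℤ) :
    0 ≤ binom n t k := by
  rw [binom]
  split
  · have h1t : (0:ℝ) < 1 - t := by linarith
    positivity
  · exact le_rfl

lemma ratio_up (n : ℕ) (t : ℝ) (k : ℤ) :
    binom n t (k+1) * ((k:ℝ)+1) * (1-t) = binom n t k * ((n:ℝ)-(k:ℝ)) * t := by
  by_cases h : 0 ≤ k ∧ k ≤ (n:ℤ)
  · obtain ⟨m, rfl⟩ : ∃ m:ℕ, k = (m:ℤ) := ⟨k.toNat, (Int.toNat_of_nonneg h.1).symm⟩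
    have hmn : m ≤ n := by exact_mod_cast h.2
    rcases eq_or_lt_of_le hmn with heq | hlt
    · have hzero : binom n t ((m:ℤ)+1) = 0 := binom_outside n t _ (by push_cast; omega)
      rw [hzero, heq]
      push_cast
      ring
    · have h1 : ((m:ℕ):ℤ) + 1 = ((m+1:ℕ):ℤ) := by push_cast; ring
      rw [h1, binom_nat n t (m+1) (by omega), binom_nat n t m hmn]
      have h2 : n.choose (m + 1) * (m + 1) = n.choose m * (n - m) := Nat.choose_succ_right_eq n m
      have hc : (n.choose (m+1) : ℝ) * ((m:ℝ)+1) = (n.choose m : ℝ) * ((n:ℝ) - m) := by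
        calc (n.choose (m+1) : ℝ) * ((m:ℝ)+1) = ((n.choose (m+1) * (m+1) : ℕ) : ℝ) := by
              push_cast; ring
        _ = ((n.choose m * (n - m) : ℕ) : ℝ) := by rw [h2]
        _ = (n.choose m : ℝ) * ((n:ℝ) - m) := by push_cast [Nat.cast_sub hmn]; ring
      have hpow : (1-t) ^ (n - (m+1)) * (1-t) = (1-t) ^ (n - m) := by
        rw [← pow_succ]
        congr 1
        omega
      push_cast
      calc (n.choose (m+1) : ℝ) * t ^ (m+1) * (1-t) ^ (n-(m+1)) * ((m:ℝ)+1) * (1-t)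
          = ((n.choose (m+1) : ℝ) * ((m:ℝ)+1)) * t ^ (m+1) * ((1-t) ^ (n-(m+1)) * (1-t)) := by
            ring
        _ = ((n.choose m : ℝ) * ((n:ℝ) - m)) * t ^ (m+1) * (1-t) ^ (n-m) := by rw [hpow, hc]
        _ = (n.choose m : ℝ) * t ^ m * (1-t) ^ (n-m) * ((n:ℝ)-(m:ℝ)) * t := by ring
  · rw [binom_outside n t k h]
    by_cases h2 : k = -1
    · subst h2
      norm_num
    · rw [binom_outside n t (k+1) (by omega)]
      ring

lemma sum_shift_up (n : ℕ) (F : ℤ → ℝ) (h0 : F 0 = 0) (h1 : F ((n:ℤ)+1) = 0) :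
    ∑ k ∈ Icc (0:ℤ) (n:ℤ), F k = ∑ k ∈ Icc (0:ℤ) (n:ℤ), F (k+1) := by
  have e1 : ∑ k ∈ Icc (0:ℤ) (n:ℤ), F (k+1) = ∑ j ∈ Icc ((0:ℤ)+1) ((n:ℤ)+1), F j := by
    rw [← Finset.map_add_right_Icc (0:ℤ) (n:ℤ) 1, Finset.sum_map]
    rfl
  have e2 : Icc ((0:ℤ)+1) ((n:ℤ)+1) = insert ((n:ℤ)+1) (Icc (1:ℤ) (n:ℤ)) := by
    ext j; simp only [mem_Icc, mem_insert]; omega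
  have e3 : Icc (0:ℤ) (n:ℤ) = insert (0:ℤ) (Icc (1:ℤ) (n:ℤ)) := by
    ext j; simp only [mem_Icc, mem_insert]; omega
  rw [e1, e2, Finset.sum_insert (by simp), e3, Finset.sum_insert (by simp), h0, h1]

lemma sum_shift_down (n : ℕ) (F : ℤ → ℝ) (h0 : F (-1) = 0) (h1 : F (n:ℤ) = 0) :
    ∑ k ∈ Icc (0:ℤ) (n:ℤ), F (k-1) = ∑ k ∈ Icc (0:ℤ) (n:ℤ), F k := by
  have e1 : ∑ k ∈ Icc (0:ℤ) (n:ℤ), F (k-1) = ∑ j ∈ Icc ((0:ℤ)+(-1)) ((n:ℤ)+(-1)), F j := by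
    rw [← Finset.map_add_right_Icc (0:ℤ) (n:ℤ) (-1), Finset.sum_map]
    rfl
  have e2 : Icc ((0:ℤ)+(-1)) ((n:ℤ)+(-1)) = insert (-1:ℤ) (Icc (0:ℤ) ((n:ℤ)-1)) := by
    ext j; simp only [mem_Icc, mem_insert]; omega
  have e3 : Icc (0:ℤ) (n:ℤ) = insert ((n:ℤ)) (Icc (0:ℤ) ((n:ℤ)-1)) := by
    ext j; simp only [mem_Icc, mem_insert]; omega
  rw [e1, e2, Finset.sum_insert (by simp), e3, Finset.sum_insert (by simp), h0, h1]

/-- Cleared-denominator adjoint operator: `Bop g = n t (1-t) ∇* g`. -/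
noncomputable def Bop (n : ℕ) (t : ℝ) (g : ℤ → ℝ) (j : ℤ) : ℝ :=
  t*(1-t)*(2*(j:ℝ)-(n:ℝ)) * g j - t^2*((n:ℝ)-(j:ℝ)) * g (j+1) + (1-t)^2*(j:ℝ) * g (j-1)

lemma adjoint_sum (n : ℕ) (t : ℝ) (hn : 1 ≤ n) (ht0 : 0 < t) (ht1 : t < 1) (f g : ℤ → ℝ) :
    (n:ℝ) * t * (1-t) * ip n t (Dop n f) g = ip n t f (Bop n t g) := by
  have hne : (1:ℝ) - t ≠ 0 := by intro h; nlinarith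
  have hnne : (n:ℝ) ≠ 0 := by positivity
  have ht : t ≠ 0 := ne_of_gt ht0
  set F : ℤ → ℝ := fun k => binom n t k * ((k:ℝ)/(n:ℝ)) * g k * f (k-1) with hF
  set G : ℤ → ℝ := fun k => binom n t k * (((n:ℝ)-(k:ℝ))/(n:ℝ)) * g k * f (k+1) with hG
  have step1 : ip n t (Dop n f) g
      = (∑ k ∈ Icc (0:ℤ) (n:ℤ), (binom n t k * ((2*(k:ℝ)-(n:ℝ))/(n:ℝ)) * g k * f k - F k + G k)) := by
    rw [ip]
    refine Finset.sum_congr rfl (fun k _ => ?_)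
    simp only [hF, hG, Dop]
    ring
  have hF0 : F 0 = 0 := by simp [hF]
  have hFn1 : F ((n:ℤ)+1) = 0 := by
    simp only [hF]
    rw [binom_outside n t ((n:ℤ)+1) (by omega)]
    ring
  have hGm1 : G (-1) = 0 := by
    simp only [hG]
    rw [binom_outside n t (-1) (by omega)]
    ring
  have hGn : G (n:ℤ) = 0 := by
    simp only [hG]
    have : ((n:ℝ) - ((n:ℤ):ℝ)) = 0 := by push_cast; ring
    rw [this]
    ring
  have cancel : (n:ℝ) * ((n:ℝ))⁻¹ = 1 := mul_inv_cancel₀ hnne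
  have key : ∀ k ∈ Icc (0:ℤ) (n:ℤ),
      (n:ℝ) * t * (1-t) * (binom n t k * ((2*(k:ℝ)-(n:ℝ))/(n:ℝ)) * g k * f k - F (k+1) + G (k-1))
        = binom n t k * f k * Bop n t g k := by
    intro k _
    have r1 := ratio_up n t k
    have r2 : binom n t k * (k:ℝ) * (1-t) = binom n t (k-1) * ((n:ℝ)-((k:ℝ)-1)) * t := by
      have := ratio_up n t (k-1)
      rw [sub_add_cancel] at this
      push_cast at this
      convert this using 2 <;> push_cast <;> ring
    simp only [hF, hG, Bop, add_sub_cancel_right, sub_add_cancel]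
    push_cast
    linear_combination (-(t * g (k+1) * f k)) * r1 + (-((1-t) * g (k-1) * f k)) * r2
      + (t*(1-t)*(binom n t k * (2*(k:ℝ)-(n:ℝ)) * g k * f k
          - binom n t (k+1) * ((k:ℝ)+1) * g (k+1) * f k
          + binom n t (k-1) * ((n:ℝ)-(k:ℝ)+1) * g (k-1) * f k)) * cancel
  have sums_eq : (∑ k ∈ Icc (0:ℤ) (n:ℤ), (binom n t k * ((2*(k:ℝ)-(n:ℝ))/(n:ℝ)) * g k * f k - F k + G k))
      = (∑ k ∈ Icc (0:ℤ) (n:ℤ), (binom n t k * ((2*(k:ℝ)-(n:ℝ))/(n:ℝ)) * g k * f k - F (k+1) + G (k-1))) := by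
    rw [Finset.sum_add_distrib, Finset.sum_add_distrib, Finset.sum_sub_distrib,
      Finset.sum_sub_distrib, sum_shift_up n F hF0 hFn1, ← sum_shift_down n G hGm1 hGn]
  calc (n:ℝ) * t * (1-t) * ip n t (Dop n f) g
      = ∑ k ∈ Icc (0:ℤ) (n:ℤ), (n:ℝ) * t * (1-t) *
          (binom n t k * ((2*(k:ℝ)-(n:ℝ))/(n:ℝ)) * g k * f k - F (k+1) + G (k-1)) := by
        rw [step1, sums_eq, Finset.mul_sum]
    _ = ∑ k ∈ Icc (0:ℤ) (n:ℤ), binom n t k * f k * Bop n t g k :=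
        Finset.sum_congr rfl key
    _ = ip n t f (Bop n t g) := rfl




lemma phiC (n : ℕ) (t : ℝ) (ht1 : t < 1) (s : ℕ) (m : ℕ) (hm : m ≤ n) :
    (1-t)^s * phi n t s (m:ℤ) = (Nat.factorial s : ℝ) * psi n t s m := by
  have hne : (1:ℝ) - t ≠ 0 := by intro h; nlinarith
  rw [phi_nat n t s m hm]
  field_simp

lemma Bop_phi (n : ℕ) (t : ℝ) (ht1 : t < 1) (s : ℕ) (k : ℤ)
    (hk : k ∈ Icc (0:ℤ) (n:ℤ)) :
    Bop n t (phi n t s) k = (1-t) * phi n t (s+1) k := by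
  have hne : (1:ℝ) - t ≠ 0 := by intro h; nlinarith
  simp only [mem_Icc] at hk
  obtain ⟨m, rfl⟩ : ∃ m:ℕ, k = (m:ℤ) := ⟨k.toNat, (Int.toNat_of_nonneg hk.1).symm⟩
  have hmn : m ≤ n := by exact_mod_cast hk.2
  apply mul_left_cancel₀ (pow_ne_zero s hne)
  have key := coeffC n t m hmn s
  have P0 := phiC n t ht1 s m hmn
  have P2 : (1-t)^s * ((1-t) * phi n t (s+1) (m:ℤ))
      = ((s:ℝ)+1) * ((Nat.factorial s : ℝ) * psi n t (s+1) m) := by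
    have h := phiC n t ht1 (s+1) m hmn
    rw [pow_succ, Nat.factorial_succ] at h
    push_cast at h ⊢
    linear_combination h
  have e2 : (1-t)^s * (t^2*((n:ℝ)-((m:ℤ):ℝ)) * phi n t s ((m:ℤ)+1))
      = t^2*((n-m:ℕ):ℝ) * ((Nat.factorial s:ℝ) * psi n t s (m+1)) := by
    rcases eq_or_lt_of_le hmn with heq | hlt
    · have hz1 : ((n:ℝ) - ((m:ℤ):ℝ)) = 0 := by rw [heq]; push_cast; ring
      have hz2 : n - m = 0 := by omega
      rw [hz1, hz2]
      push_cast
      ring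
    · have h1 : ((m:ℕ):ℤ) + 1 = ((m+1:ℕ):ℤ) := by push_cast; ring
      rw [h1]
      have h := phiC n t ht1 s (m+1) (by omega)
      push_cast [Nat.cast_sub hmn] at h ⊢
      linear_combination (t^2*((n:ℝ)-(m:ℝ))) * h
  have e1 : (1-t)^s * ((1-t)^2*((m:ℤ):ℝ) * phi n t s ((m:ℤ)-1))
      = (1-t)^2*(m:ℝ) * ((Nat.factorial s:ℝ) * psi n t s (m-1)) := by
    rcases Nat.eq_zero_or_pos m with rfl | hm0
    · simp
    · obtain ⟨m', rfl⟩ : ∃ m', m = m' + 1 := ⟨m - 1, by omega⟩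
      have h1 : ((m'+1:ℕ):ℤ) - 1 = (m' : ℤ) := by push_cast; ring
      rw [h1, show m' + 1 - 1 = m' from rfl]
      have h := phiC n t ht1 s m' (by omega)
      push_cast at h ⊢
      linear_combination ((1-t)^2*((m':ℝ)+1)) * h
  rw [Bop]
  push_cast at e1 e2 key P0 P2 ⊢
  linear_combination (t*(1-t)*(2*(m:ℝ)-(n:ℝ))) * P0 - e2 + e1
    + (Nat.factorial s : ℝ) * key - P2


lemma ip_symm (n : ℕ) (t : ℝ) (f g : ℤ → ℝ) : ip n t f g = ip n t g f :=
  Finset.sum_congr rfl fun k _ => by ring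

lemma Dop_phi_all (n : ℕ) (t : ℝ) (hn : 1 ≤ n) (ht1 : t < 1) (r : ℕ) (k : ℤ)
    (hk : k ∈ Icc (0:ℤ) (n:ℤ)) :
    Dop n (phi n t r) k = mu n t r * phi n t (r-1) k := by
  cases r with
  | zero => rw [Dop_phi_zero n t hn k hk, mu]; push_cast; ring
  | succ r' => exact Dop_phi n t hn ht1 r' k hk

lemma ip_rec (n : ℕ) (t : ℝ) (hn : 1 ≤ n) (ht0 : 0 < t) (ht1 : t < 1) (r s : ℕ) :
    ip n t (phi n t (r+1)) (phi n t (s+1))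
      = (n:ℝ) * t * mu n t (r+1) * ip n t (phi n t r) (phi n t s) := by
  have hne : (1:ℝ) - t ≠ 0 := by intro h; nlinarith
  have h1 := adjoint_sum n t hn ht0 ht1 (phi n t (r+1)) (phi n t s)
  have hL : ip n t (Dop n (phi n t (r+1))) (phi n t s)
      = mu n t (r+1) * ip n t (phi n t r) (phi n t s) := by
    rw [ip, ip, Finset.mul_sum]
    exact Finset.sum_congr rfl fun k hk => by rw [Dop_phi n t hn ht1 r k hk]; ring
  have hR : ip n t (phi n t (r+1)) (Bop n t (phi n t s))
      = (1-t) * ip n t (phi n t (r+1)) (phi n t (s+1)) := by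
    rw [ip, ip, Finset.mul_sum]
    exact Finset.sum_congr rfl fun k hk => by rw [Bop_phi n t ht1 s k hk]; ring
  rw [hL, hR] at h1
  apply mul_left_cancel₀ hne
  linear_combination -h1

lemma ip_zero_rec (n : ℕ) (t : ℝ) (hn : 1 ≤ n) (ht0 : 0 < t) (ht1 : t < 1) (s : ℕ) :
    ip n t (phi n t 0) (phi n t (s+1)) = 0 := by
  have hne : (1:ℝ) - t ≠ 0 := by intro h; nlinarith
  have h1 := adjoint_sum n t hn ht0 ht1 (phi n t 0) (phi n t s)
  have hL : ip n t (Dop n (phi n t 0)) (phi n t s) = 0 := by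
    apply Finset.sum_eq_zero
    intro k hk
    rw [Dop_phi_zero n t hn k hk]
    ring
  have hR : ip n t (phi n t 0) (Bop n t (phi n t s))
      = (1-t) * ip n t (phi n t 0) (phi n t (s+1)) := by
    rw [ip, ip, Finset.mul_sum]
    exact Finset.sum_congr rfl fun k hk => by rw [Bop_phi n t ht1 s k hk]; ring
  rw [hL, hR] at h1
  have h2 : (1-t) * ip n t (phi n t 0) (phi n t (s+1)) = (1-t) * 0 := by
    rw [mul_zero, ← h1]; ring
  exact mul_left_cancel₀ hne h2

lemma orth_lt (n : ℕ) (t : ℝ) (hn : 1 ≤ n) (ht0 : 0 < t) (ht1 : t < 1) :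
    ∀ r s : ℕ, r < s → ip n t (phi n t r) (phi n t s) = 0 := by
  intro r
  induction r with
  | zero =>
    intro s hs
    obtain ⟨s', rfl⟩ : ∃ s', s = s' + 1 := ⟨s - 1, by omega⟩
    exact ip_zero_rec n t hn ht0 ht1 s'
  | succ r' ih =>
    intro s hs
    obtain ⟨s', rfl⟩ : ∃ s', s = s' + 1 := ⟨s - 1, by omega⟩
    rw [ip_rec n t hn ht0 ht1 r' s', ih s' (by omega), mul_zero]

lemma orth (n : ℕ) (t : ℝ) (hn : 1 ≤ n) (ht0 : 0 < t) (ht1 : t < 1)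
    (r s : ℕ) (hrs : r ≠ s) : ip n t (phi n t r) (phi n t s) = 0 := by
  rcases lt_or_gt_of_ne hrs with h | h
  · exact orth_lt n t hn ht0 ht1 r s h
  · rw [ip_symm]
    exact orth_lt n t hn ht0 ht1 s r h

lemma mu_pos (n : ℕ) (t : ℝ) (ht1 : t < 1) (r : ℕ) (hr1 : 1 ≤ r) (hrn : r ≤ n) :
    0 < mu n t r := by
  rw [mu]
  have h1 : (0:ℝ) < (r:ℝ) := by exact_mod_cast hr1
  have h2 : (0:ℝ) < (n:ℝ) - r + 1 := by
    have : (r:ℝ) ≤ (n:ℝ) := by exact_mod_cast hrn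
    linarith
  have h3 : (0:ℝ) < (n:ℝ) := by
    have : (1:ℝ) ≤ (n:ℝ) := by exact_mod_cast le_trans hr1 hrn
    linarith
  have h4 : (0:ℝ) < 1 - t := by linarith
  positivity

lemma hpos (n : ℕ) (t : ℝ) (hn : 1 ≤ n) (ht0 : 0 < t) (ht1 : t < 1) :
    ∀ r : ℕ, r ≤ n → 0 < ip n t (phi n t r) (phi n t r) := by
  intro r
  induction r with
  | zero =>
    intro _
    have heq : ip n t (phi n t 0) (phi n t 0) = ∑ k ∈ Icc (0:ℤ) (n:ℤ), binom n t k := by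
      refine Finset.sum_congr rfl fun k hk => ?_
      simp only [mem_Icc] at hk
      obtain ⟨m, rfl⟩ : ∃ m:ℕ, k = (m:ℤ) := ⟨k.toNat, (Int.toNat_of_nonneg hk.1).symm⟩
      rw [phi_zero n t m (by exact_mod_cast hk.2)]
      ring
    rw [heq]
    apply Finset.sum_pos'
    · exact fun k _ => binom_nonneg n t ht0 ht1 k
    · exact ⟨0, by simp only [mem_Icc]; omega,
        by exact_mod_cast binom_pos n t ht0 ht1 0 (Nat.zero_le n)⟩
  | succ r' ih =>
    intro hr
    rw [ip_rec n t hn ht0 ht1 r' r']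
    have h1 := ih (by omega)
    have h2 := mu_pos n t ht1 (r'+1) (by omega) hr
    have h3 : (0:ℝ) < (n:ℝ) := by
      have : (1:ℝ) ≤ (n:ℝ) := by exact_mod_cast hn
      linarith
    exact mul_pos (mul_pos (mul_pos h3 ht0) h2) h1


lemma sum_bridge (n : ℕ) (F : ℤ → ℝ) :
    ∑ k ∈ Icc (0:ℤ) (n:ℤ), F k = ∑ m ∈ range (n+1), F ((m:ℕ):ℤ) := by
  have himg : Icc (0:ℤ) (n:ℤ) = (range (n+1)).image (fun m : ℕ => (m:ℤ)) := by
    ext k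
    simp only [mem_Icc, mem_image, mem_range]
    constructor
    · intro h
      exact ⟨k.toNat, by omega, by omega⟩
    · rintro ⟨m, hm, rfl⟩
      omega
  rw [himg, Finset.sum_image (by intro x _ y _ h; simpa using h)]

lemma sum_bridge_fin (n : ℕ) (F : ℤ → ℝ) :
    ∑ k ∈ Icc (0:ℤ) (n:ℤ), F k = ∑ m : Fin (n+1), F (((m:ℕ):ℕ):ℤ) := by
  rw [sum_bridge n F, ← Fin.sum_univ_eq_sum_range (fun m => F ((m:ℕ):ℤ)) (n+1)]

lemma complete (n : ℕ) (t : ℝ) (hn : 1 ≤ n) (ht0 : 0 < t) (ht1 : t < 1) (f : ℤ → ℝ) :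
    ∃ a : ℕ → ℝ, ∀ k ∈ Icc (0:ℤ) (n:ℤ),
      f k = ∑ r ∈ range (n+1), a r * phi n t r k := by
  classical
  set v : Fin (n+1) → (Fin (n+1) → ℝ) := fun r m => phi n t (r:ℕ) (((m:ℕ):ℕ):ℤ) with hv
  have ip_fin : ∀ r s : Fin (n+1),
      (∑ m : Fin (n+1), binom n t (((m:ℕ):ℕ):ℤ) * v r m * v s m)
        = ip n t (phi n t (r:ℕ)) (phi n t (s:ℕ)) := by
    intro r s
    rw [ip, sum_bridge_fin n]
  have lin : LinearIndependent ℝ v := by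
    rw [linearIndependent_iff']
    intro s g hsum i hi
    have key : ∑ m : Fin (n+1), binom n t (((m:ℕ):ℕ):ℤ) * ((∑ j ∈ s, g j • v j) m) * v i m
        = 0 := by
      rw [hsum]
      simp
    have expand : ∑ m : Fin (n+1), binom n t (((m:ℕ):ℕ):ℤ) * ((∑ j ∈ s, g j • v j) m) * v i m
        = ∑ j ∈ s, g j * ip n t (phi n t (j:ℕ)) (phi n t (i:ℕ)) := by
      calc ∑ m : Fin (n+1), binom n t (((m:ℕ):ℕ):ℤ) * ((∑ j ∈ s, g j • v j) m) * v i m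
          = ∑ m : Fin (n+1), ∑ j ∈ s,
              g j * (binom n t (((m:ℕ):ℕ):ℤ) * v j m * v i m) := by
            refine Finset.sum_congr rfl fun m _ => ?_
            rw [Finset.sum_apply, Finset.mul_sum, Finset.sum_mul]
            refine Finset.sum_congr rfl fun j _ => ?_
            simp only [Pi.smul_apply, smul_eq_mul]
            ring
        _ = ∑ j ∈ s, ∑ m : Fin (n+1),
              g j * (binom n t (((m:ℕ):ℕ):ℤ) * v j m * v i m) := Finset.sum_comm
        _ = ∑ j ∈ s, g j * ip n t (phi n t (j:ℕ)) (phi n t (i:ℕ)) := by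
            refine Finset.sum_congr rfl fun j _ => ?_
            rw [← ip_fin j i, Finset.mul_sum]
    rw [expand] at key
    have collapse : ∑ j ∈ s, g j * ip n t (phi n t (j:ℕ)) (phi n t (i:ℕ))
        = g i * ip n t (phi n t (i:ℕ)) (phi n t (i:ℕ)) := by
      rw [Finset.sum_eq_single i]
      · intro j hj hji
        rw [orth n t hn ht0 ht1 (j:ℕ) (i:ℕ) (by simpa using Fin.val_ne_of_ne hji), mul_zero]
      · intro h
        exact absurd hi h
    rw [collapse] at key
    have hp := hpos n t hn ht0 ht1 (i:ℕ) (by omega)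
    exact (mul_eq_zero.mp key).resolve_right (ne_of_gt hp)
  have card_eq : Fintype.card (Fin (n+1)) = Module.finrank ℝ (Fin (n+1) → ℝ) := by
    simp
  have span := lin.span_eq_top_of_card_eq_finrank card_eq
  have mem : (fun m : Fin (n+1) => f (((m:ℕ):ℕ):ℤ)) ∈ Submodule.span ℝ (Set.range v) := by
    rw [span]
    trivial
  rw [Submodule.mem_span_range_iff_exists_fun] at mem
  obtain ⟨c, hc⟩ := mem
  refine ⟨fun r => if h : r < n+1 then c ⟨r, h⟩ else 0, ?_⟩
  intro k hk
  simp only [mem_Icc] at hk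
  obtain ⟨m, rfl⟩ : ∃ m:ℕ, k = (m:ℤ) := ⟨k.toNat, (Int.toNat_of_nonneg hk.1).symm⟩
  have hmn : m ≤ n := by exact_mod_cast hk.2
  have hm : m < n + 1 := by omega
  have happ := congrFun hc ⟨m, hm⟩
  have hsum2 : ∑ r ∈ range (n+1), (if h : r < n+1 then c ⟨r,h⟩ else 0) * phi n t r ((m:ℕ):ℤ)
      = ∑ i : Fin (n+1), c i * phi n t (i:ℕ) ((m:ℕ):ℤ) := by
    rw [← Fin.sum_univ_eq_sum_range
      (fun r => (if h : r < n+1 then c ⟨r,h⟩ else 0) * phi n t r ((m:ℕ):ℤ)) (n+1)]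
    refine Finset.sum_congr rfl fun i _ => ?_
    rw [dif_pos i.isLt]
  rw [hsum2, ← happ, Finset.sum_apply]
  refine Finset.sum_congr rfl fun i _ => ?_
  simp [hv]

lemma psi_one (n : ℕ) (t : ℝ) (m : ℕ) :
    psi n t 1 m = (m:ℝ)*(1-t) - ((n-m:ℕ):ℝ)*t := by
  have h : psi n t 1 m = (derivative (Qp t m (n-m))).eval 0 := by
    rw [psi, ← coeff_zero_eq_eval_zero, coeff_derivative]
    ring
  rw [h, derivQp]
  simp

lemma phi_one (n : ℕ) (t : ℝ) (ht1 : t < 1) (m : ℕ) (hm : m ≤ n) :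
    phi n t 1 (m:ℤ) = ((m:ℝ) - n*t)/(1-t) := by
  have hne : (1:ℝ) - t ≠ 0 := by intro h; nlinarith
  rw [phi_nat n t 1 m hm, psi_one]
  push_cast [Nat.cast_sub hm]
  rw [Nat.factorial_one]
  field_simp
  ring

lemma psi_top (n : ℕ) (t : ℝ) (ht0 : 0 < t) (ht1 : t < 1) (m : ℕ) (hm : m ≤ n) :
    psi n t n m = (1-t)^m * (-t)^(n-m) := by
  have hne : (1:ℝ) - t ≠ 0 := by intro h; nlinarith
  have hnt : (-t:ℝ) ≠ 0 := by intro h; nlinarith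
  rw [psi, Qp]
  have hA : (1 + (1 - C t) * X : Polynomial ℝ) = C (1-t) * X + C 1 := by
    rw [map_sub, C_1]
    ring
  have hB : (1 - C t * X : Polynomial ℝ) = C (-t) * X + C 1 := by
    rw [map_neg, C_1]
    ring
  rw [hA, hB]
  have hdA : ((C (1-t) * X + C 1 : Polynomial ℝ)^m).natDegree = m := by
    rw [natDegree_pow, natDegree_linear hne]
    ring
  have hdB : ((C (-t) * X + C 1 : Polynomial ℝ)^(n-m)).natDegree = n - m := by
    rw [natDegree_pow, natDegree_linear hnt]
    ring
  have hco := coeff_mul_degree_add_degree ((C (1-t) * X + C 1 : Polynomial ℝ)^m)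
    ((C (-t) * X + C 1 : Polynomial ℝ)^(n-m))
  rw [hdA, hdB, show m + (n - m) = n from by omega] at hco
  rw [hco, leadingCoeff_pow, leadingCoeff_pow, leadingCoeff_linear hne,
    leadingCoeff_linear hnt]

lemma phi_top (n : ℕ) (t : ℝ) (ht0 : 0 < t) (ht1 : t < 1) (m : ℕ) (hm : m ≤ n) :
    phi n t n (m:ℤ) = (Nat.factorial n : ℝ) * (-t/(1-t))^(n-m) := by
  have hne : (1:ℝ) - t ≠ 0 := by intro h; nlinarith
  rw [phi_nat n t n m hm, psi_top n t ht0 ht1 m hm, div_pow]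
  have hsplit : (1-t)^n = (1-t)^m * (1-t)^(n-m) := by
    rw [← pow_add]
    congr 1
    omega
  rw [hsplit]
  have h1 : (1-t)^m ≠ 0 := pow_ne_zero _ hne
  have h2 : (1-t)^(n-m) ≠ 0 := pow_ne_zero _ hne
  field_simp

lemma mu_zero (n : ℕ) (t : ℝ) : mu n t 0 = 0 := by simp [mu]

lemma mu_cancel (n : ℕ) (t : ℝ) (hn : 1 ≤ n) (ht1 : t < 1) (r : ℕ) :
    (1-t) * mu n t r = (r:ℝ)*((n:ℝ)-r+1)/(n:ℝ) := by
  have hne : (1:ℝ) - t ≠ 0 := by intro h; nlinarith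
  have hnn : (n:ℝ) ≠ 0 := by positivity
  rw [mu]
  field_simp

lemma Dop_sum (n : ℕ) (N : ℕ) (a : ℕ → ℝ) (F : ℕ → ℤ → ℝ) (k : ℤ) :
    Dop n (fun j => ∑ r ∈ range N, a r * F r j) k
      = ∑ r ∈ range N, a r * Dop n (F r) k := by
  calc Dop n (fun j => ∑ r ∈ range N, a r * F r j) k
      = ∑ r ∈ range N, ((k:ℝ)/(n:ℝ) * (a r * F r k - a r * F r (k-1))
          + ((n:ℝ)-(k:ℝ))/(n:ℝ) * (a r * F r (k+1) - a r * F r k)) := by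
        rw [Dop, ← Finset.sum_sub_distrib, ← Finset.sum_sub_distrib, Finset.mul_sum,
          Finset.mul_sum, ← Finset.sum_add_distrib]
    _ = ∑ r ∈ range N, a r * Dop n (F r) k := by
        refine Finset.sum_congr rfl fun r _ => ?_
        rw [Dop]
        ring

lemma ip_expand (n : ℕ) (t : ℝ) (N : ℕ) (a b : ℕ → ℝ) (F G : ℕ → ℤ → ℝ) :
    ip n t (fun k => ∑ r ∈ range N, a r * F r k) (fun k => ∑ s ∈ range N, b s * G s k)
      = ∑ r ∈ range N, ∑ s ∈ range N, (a r * b s) * ip n t (F r) (G s) := by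
  rw [ip]
  calc ∑ k ∈ Icc (0:ℤ) (n:ℤ), binom n t k * (∑ r ∈ range N, a r * F r k) * (∑ s ∈ range N, b s * G s k)
      = ∑ k ∈ Icc (0:ℤ) (n:ℤ), ∑ r ∈ range N, ∑ s ∈ range N,
          (a r * b s) * (binom n t k * F r k * G s k) := by
        refine Finset.sum_congr rfl fun k _ => ?_
        rw [mul_assoc, Finset.sum_mul_sum, Finset.mul_sum]
        refine Finset.sum_congr rfl fun r _ => ?_
        rw [Finset.mul_sum]
        refine Finset.sum_congr rfl fun sIdx _ => ?_
        ring
    _ = ∑ r ∈ range N, ∑ k ∈ Icc (0:ℤ) (n:ℤ), ∑ s ∈ range N,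
          (a r * b s) * (binom n t k * F r k * G s k) := Finset.sum_comm
    _ = ∑ r ∈ range N, ∑ s ∈ range N, ∑ k ∈ Icc (0:ℤ) (n:ℤ),
          (a r * b s) * (binom n t k * F r k * G s k) := by
        exact Finset.sum_congr rfl fun r _ => Finset.sum_comm
    _ = ∑ r ∈ range N, ∑ s ∈ range N, (a r * b s) * ip n t (F r) (G s) := by
        refine Finset.sum_congr rfl fun r _ => Finset.sum_congr rfl fun sIdx _ => ?_
        rw [ip, Finset.mul_sum]

lemma collapse (N : ℕ) (c : ℕ → ℝ) (M : ℕ → ℕ → ℝ)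
    (hoff : ∀ r ∈ range N, ∀ s ∈ range N, r ≠ s → (c r * c s) * M r s = 0) :
    ∑ r ∈ range N, ∑ s ∈ range N, (c r * c s) * M r s
      = ∑ r ∈ range N, (c r)^2 * M r r := by
  refine Finset.sum_congr rfl fun r hr => ?_
  rw [Finset.sum_eq_single r]
  · ring
  · exact fun s hs hsr => hoff r hr s hs (Ne.symm hsr)
  · exact fun h => absurd hr h

lemma Dop_congr (n : ℕ) (hn : 1 ≤ n) (f g : ℤ → ℝ)
    (h : ∀ k ∈ Icc (0:ℤ) (n:ℤ), f k = g k) :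
    ∀ k ∈ Icc (0:ℤ) (n:ℤ), Dop n f k = Dop n g k := by
  intro k hk
  have hk' := hk
  simp only [mem_Icc] at hk'
  rw [Dop, Dop]
  have h1 : (k:ℝ)/(n:ℝ) * (f k - f (k-1)) = (k:ℝ)/(n:ℝ) * (g k - g (k-1)) := by
    by_cases hk0 : k = 0
    · subst hk0
      norm_num
    · rw [h k hk, h (k-1) (by simp only [mem_Icc]; omega)]
  have h2 : ((n:ℝ)-(k:ℝ))/(n:ℝ) * (f (k+1) - f k) = ((n:ℝ)-(k:ℝ))/(n:ℝ) * (g (k+1) - g k) := by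
    by_cases hkn : k = (n:ℤ)
    · subst hkn
      have : ((n:ℝ) - ((n:ℤ):ℝ)) = 0 := by push_cast; ring
      rw [this]
      norm_num
    · rw [h k hk, h (k+1) (by simp only [mem_Icc]; omega)]
  rw [h1, h2]

lemma ip_congr (n : ℕ) (t : ℝ) (f f' g g' : ℤ → ℝ)
    (hf : ∀ k ∈ Icc (0:ℤ) (n:ℤ), f k = f' k) (hg : ∀ k ∈ Icc (0:ℤ) (n:ℤ), g k = g' k) :
    ip n t f g = ip n t f' g' :=
  Finset.sum_congr rfl fun k hk => by rw [hf k hk, hg k hk]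


lemma criterion (n : ℕ) (t : ℝ) (hn : 1 ≤ n) (ht0 : 0 < t) (ht1 : t < 1)
    (f : ℤ → ℝ) (aa : ℕ → ℝ) (ha0 : aa 0 = 0)
    (hexp : ∀ k ∈ Icc (0:ℤ) (n:ℤ), f k = ∑ r ∈ range (n+1), aa r * phi n t r k) :
    ((∑ k ∈ Icc (0:ℤ) (n:ℤ), binom n t k * f k ^ 2
        = (n : ℝ) * t * (1 - t) * ∑ k ∈ Icc (0:ℤ) (n:ℤ),
            binom n t k * ((k : ℝ) / n * (f k - f (k - 1))
              + ((n : ℝ) - k) / n * (f (k + 1) - f k)) ^ 2)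
      ↔ ∀ r, 1 < r → r < n → aa r = 0) := by
  have hne : (1:ℝ) - t ≠ 0 := by intro h; nlinarith
  have hnn : (n:ℝ) ≠ 0 := by positivity
  have hnpos : (0:ℝ) < (n:ℝ) := by
    have : (1:ℝ) ≤ (n:ℝ) := by exact_mod_cast hn
    linarith
  set H : ℕ → ℝ := fun r => ip n t (phi n t r) (phi n t r) with hH
  -- left side
  have e0 : ∑ k ∈ Icc (0:ℤ) (n:ℤ), binom n t k * f k ^ 2 = ip n t f f := by
    rw [ip]
    exact Finset.sum_congr rfl fun k _ => by ring
  have e1 : ip n t f f = ∑ r ∈ range (n+1), (aa r)^2 * H r := by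
    rw [ip_congr n t f (fun k => ∑ r ∈ range (n+1), aa r * phi n t r k)
      f (fun k => ∑ r ∈ range (n+1), aa r * phi n t r k) hexp hexp,
      ip_expand n t (n+1) aa aa (fun r => phi n t r) (fun r => phi n t r),
      collapse (n+1) aa (fun r s => ip n t (phi n t r) (phi n t s))
        (fun r _ s _ hrs => by
          show aa r * aa s * ip n t (phi n t r) (phi n t s) = 0
          rw [orth n t hn ht0 ht1 r s hrs, mul_zero])]
  -- right side
  have e2 : ∑ k ∈ Icc (0:ℤ) (n:ℤ), binom n t k * ((k : ℝ) / n * (f k - f (k - 1))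
      + ((n : ℝ) - k) / n * (f (k + 1) - f k)) ^ 2
      = ip n t (Dop n f) (Dop n f) := by
    rw [ip]
    exact Finset.sum_congr rfl fun k _ => by rw [Dop]; ring
  have hDexp : ∀ k ∈ Icc (0:ℤ) (n:ℤ),
      Dop n f k = ∑ r ∈ range (n+1), (aa r * mu n t r) * phi n t (r-1) k := by
    intro k hk
    rw [Dop_congr n hn f (fun j => ∑ r ∈ range (n+1), aa r * phi n t r j) hexp k hk,
      Dop_sum n (n+1) aa (fun r => phi n t r) k]
    refine Finset.sum_congr rfl fun r _ => ?_
    rw [Dop_phi_all n t hn ht1 r k hk]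
    ring
  have e3 : ip n t (Dop n f) (Dop n f)
      = ∑ r ∈ range (n+1), (aa r * mu n t r)^2 * H (r-1) := by
    rw [ip_congr n t (Dop n f) (fun k => ∑ r ∈ range (n+1), (aa r * mu n t r) * phi n t (r-1) k)
      (Dop n f) (fun k => ∑ r ∈ range (n+1), (aa r * mu n t r) * phi n t (r-1) k) hDexp hDexp,
      ip_expand n t (n+1) (fun r => aa r * mu n t r) (fun r => aa r * mu n t r)
        (fun r => phi n t (r-1)) (fun r => phi n t (r-1)),
      collapse (n+1) (fun r => aa r * mu n t r) (fun r s => ip n t (phi n t (r-1)) (phi n t (s-1)))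
        ?_]
    intro r _ s _ hrs
    show (aa r * mu n t r) * (aa s * mu n t s) * ip n t (phi n t (r-1)) (phi n t (s-1)) = 0
    rcases Nat.eq_zero_or_pos r with rfl | hr0
    · rw [mu_zero]
      ring
    rcases Nat.eq_zero_or_pos s with rfl | hs0
    · rw [mu_zero]
      ring
    rw [orth n t hn ht0 ht1 (r-1) (s-1) (by omega), mul_zero]
  -- per-term identity
  set V : ℕ → ℝ := fun r => (aa r)^2 * H r * (((r:ℝ)-1)*((n:ℝ)-r)) with hV
  have eT : ∀ r ∈ range (n+1),
      (n:ℝ) * ((aa r)^2 * H r - (n:ℝ)*t*(1-t) * ((aa r * mu n t r)^2 * H (r-1)))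
        = -(V r) := by
    intro r hr
    rcases Nat.eq_zero_or_pos r with rfl | hr0
    · simp [hV, ha0]
    obtain ⟨r', rfl⟩ : ∃ r', r = r' + 1 := ⟨r - 1, by omega⟩
    have hrec : H (r'+1) = (n:ℝ)*t*(mu n t (r'+1)) * H r' := ip_rec n t hn ht0 ht1 r' r'
    have hmc : (1-t) * mu n t (r'+1) * (n:ℝ) = ((r'+1:ℕ):ℝ)*((n:ℝ)-((r'+1:ℕ):ℝ)+1) := by
      rw [mu]
      field_simp
    simp only [hV, Nat.add_sub_cancel]
    push_cast at hmc ⊢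
    linear_combination (-(n:ℝ)*t*(mu n t (r'+1))*(H r') * (aa (r'+1))^2) * hmc
      + ((aa (r'+1))^2 * (((r':ℝ)+1)*((n:ℝ)-((r':ℝ)+1)+1))) * hrec
  -- positivity of terms
  have hVnonneg : ∀ r ∈ range (n+1), 0 ≤ V r := by
    intro r hr
    simp only [mem_range] at hr
    rcases Nat.eq_zero_or_pos r with rfl | hr0
    · simp [hV, ha0]
    have h1 : (0:ℝ) ≤ (aa r)^2 := sq_nonneg _
    have h2 : (0:ℝ) ≤ H r := le_of_lt (hpos n t hn ht0 ht1 r (by omega))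
    have h3 : (0:ℝ) ≤ ((r:ℝ)-1) := by
      have : (1:ℝ) ≤ (r:ℝ) := by exact_mod_cast hr0
      linarith
    have h4 : (0:ℝ) ≤ ((n:ℝ)-r) := by
      have : (r:ℝ) ≤ (n:ℝ) := by exact_mod_cast (by omega : r ≤ n)
      linarith
    exact mul_nonneg (mul_nonneg h1 h2) (mul_nonneg h3 h4)
  rw [e0, e1, e2, e3]
  -- reduce to sum V = 0
  have hiff1 : (∑ r ∈ range (n+1), (aa r)^2 * H r
      = (n:ℝ)*t*(1-t) * ∑ r ∈ range (n+1), (aa r * mu n t r)^2 * H (r-1))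
      ↔ (∑ r ∈ range (n+1), V r = 0) := by
    rw [show ((n:ℝ)*t*(1-t) * ∑ r ∈ range (n+1), (aa r * mu n t r)^2 * H (r-1))
        = ∑ r ∈ range (n+1), (n:ℝ)*t*(1-t) * ((aa r * mu n t r)^2 * H (r-1)) from Finset.mul_sum _ _ _,
      ← sub_eq_zero, ← Finset.sum_sub_distrib]
    constructor
    · intro h
      have h2 : ∑ r ∈ range (n+1), -(V r) = 0 := by
        calc ∑ r ∈ range (n+1), -(V r)
            = ∑ r ∈ range (n+1), (n:ℝ) * ((aa r)^2 * H r
                - (n:ℝ)*t*(1-t) * ((aa r * mu n t r)^2 * H (r-1))) :=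
              (Finset.sum_congr rfl eT).symm
          _ = (n:ℝ) * ∑ r ∈ range (n+1), ((aa r)^2 * H r
                - (n:ℝ)*t*(1-t) * ((aa r * mu n t r)^2 * H (r-1))) :=
              (Finset.mul_sum _ _ _).symm
          _ = 0 := by rw [h, mul_zero]
      rwa [Finset.sum_neg_distrib, neg_eq_zero] at h2
    · intro h
      have h3 : (n:ℝ) * ∑ r ∈ range (n+1), ((aa r)^2 * H r
          - (n:ℝ)*t*(1-t) * ((aa r * mu n t r)^2 * H (r-1))) = 0 := by
        rw [Finset.mul_sum, Finset.sum_congr rfl eT, Finset.sum_neg_distrib, h, neg_zero]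
      exact (mul_eq_zero.mp h3).resolve_left hnn
  rw [hiff1]
  rw [Finset.sum_eq_zero_iff_of_nonneg hVnonneg]
  constructor
  · intro h r h1r hrn
    have hV0 := h r (by simp only [mem_range]; omega)
    simp only [hV] at hV0
    have h2 : (0:ℝ) < H r := hpos n t hn ht0 ht1 r (by omega)
    have h3 : (0:ℝ) < ((r:ℝ)-1) := by
      have : (1:ℝ) < (r:ℝ) := by exact_mod_cast h1r
      linarith
    have h4 : (0:ℝ) < ((n:ℝ)-r) := by
      have : (r:ℝ) < (n:ℝ) := by exact_mod_cast hrn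
      linarith
    have h5 : (aa r)^2 = 0 := by
      by_contra hcon
      have h6 : (0:ℝ) < (aa r)^2 := lt_of_le_of_ne (sq_nonneg _) (Ne.symm hcon)
      exact absurd hV0 (ne_of_gt (mul_pos (mul_pos h6 h2) (mul_pos h3 h4)))
    exact (pow_eq_zero_iff (two_ne_zero)).mp h5
  · intro h r hr
    simp only [mem_range] at hr
    rcases Nat.eq_zero_or_pos r with rfl | hr0
    · simp [hV, ha0]
    rcases eq_or_lt_of_le (show 1 ≤ r by omega) with heq | h1r
    · simp only [hV, ← heq]
      norm_num
    rcases eq_or_lt_of_le (show r ≤ n by omega) with heq | hrn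
    · simp only [hV, heq]
      simp
    · simp [hV, h r h1r hrn]


lemma ip_expand_one (n : ℕ) (t : ℝ) (N : ℕ) (a : ℕ → ℝ) (F : ℕ → ℤ → ℝ) (g : ℤ → ℝ) :
    ip n t (fun k => ∑ r ∈ range N, a r * F r k) g
      = ∑ r ∈ range N, a r * ip n t (F r) g := by
  rw [ip]
  calc ∑ k ∈ Icc (0:ℤ) (n:ℤ), binom n t k * (∑ r ∈ range N, a r * F r k) * g k
      = ∑ k ∈ Icc (0:ℤ) (n:ℤ), ∑ r ∈ range N, a r * (binom n t k * F r k * g k) := by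
        refine Finset.sum_congr rfl fun k _ => ?_
        rw [Finset.mul_sum, Finset.sum_mul]
        exact Finset.sum_congr rfl fun r _ => by ring
    _ = ∑ r ∈ range N, ∑ k ∈ Icc (0:ℤ) (n:ℤ), a r * (binom n t k * F r k * g k) :=
        Finset.sum_comm
    _ = ∑ r ∈ range N, a r * ip n t (F r) g := by
        refine Finset.sum_congr rfl fun r _ => ?_
        rw [ip, Finset.mul_sum]

lemma coeff_zero_of_mean (n : ℕ) (t : ℝ) (hn : 1 ≤ n) (ht0 : 0 < t) (ht1 : t < 1)
    (f : ℤ → ℝ) (aa : ℕ → ℝ)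
    (hexp : ∀ k ∈ Icc (0:ℤ) (n:ℤ), f k = ∑ r ∈ range (n+1), aa r * phi n t r k)
    (hmean : ∑ k ∈ Icc (0 : ℤ) (n : ℤ), f k * binom n t k = 0) : aa 0 = 0 := by
  have h1 : ip n t f (phi n t 0) = 0 := by
    rw [← hmean, ip]
    refine Finset.sum_congr rfl fun k hk => ?_
    simp only [mem_Icc] at hk
    obtain ⟨m, rfl⟩ : ∃ m:ℕ, k = (m:ℤ) := ⟨k.toNat, (Int.toNat_of_nonneg hk.1).symm⟩
    rw [phi_zero n t m (by exact_mod_cast hk.2)]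
    ring
  have h2 : ip n t f (phi n t 0) = aa 0 * ip n t (phi n t 0) (phi n t 0) := by
    rw [ip_congr n t f (fun k => ∑ r ∈ range (n+1), aa r * phi n t r k)
        (phi n t 0) (phi n t 0) hexp (fun _ _ => rfl),
      ip_expand_one n t (n+1) aa (fun r => phi n t r) (phi n t 0),
      Finset.sum_eq_single 0]
    · intro r _ hr0
      rw [orth n t hn ht0 ht1 r 0 hr0, mul_zero]
    · intro h
      exact absurd (by simp : (0:ℕ) ∈ range (n+1)) h
  rw [h1] at h2
  have h3 := hpos n t hn ht0 ht1 0 (by omega)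
  exact (mul_eq_zero.mp h2.symm).resolve_right (ne_of_gt h3)

end Stmt16

open Finset Stmt16 in
/-- equality in the binomial Poincaré inequality holds if and only if `f`
is (on `{0,...,n}`) a linear combination of `φ_1(k) = (k-nt)/(1-t)` and
`φ_n(k) = n!·(−t/(1-t))^{n-k}`. -/
theorem stmt16 (n : ℕ) (hn : 1 ≤ n) (t : ℝ) (ht : t ∈ Set.Ioo (0 : ℝ) 1) (f : ℤ → ℝ)
    (hmean : ∑ k ∈ Icc (0 : ℤ) (n : ℤ), f k * binom n t k = 0) :
    (∑ k ∈ Icc (0 : ℤ) (n : ℤ), binom n t k * f k ^ 2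
        = (n : ℝ) * t * (1 - t) * ∑ k ∈ Icc (0 : ℤ) (n : ℤ),
            binom n t k *
              ((k : ℝ) / n * (f k - f (k - 1)) + ((n : ℝ) - k) / n * (f (k + 1) - f k)) ^ 2)
    ↔ ∃ a c : ℝ, ∀ k ∈ Icc (0 : ℤ) (n : ℤ),
        f k = a * (((k : ℝ) - n * t) / (1 - t))
          + c * (Nat.factorial n : ℝ) * (-t / (1 - t)) ^ ((n : ℤ) - k).toNat := by
  classical
  obtain ⟨ht0, ht1⟩ := ht
  constructor
  · intro heq
    obtain ⟨aa, hexp⟩ := complete n t hn ht0 ht1 f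
    have ha0 : aa 0 = 0 := coeff_zero_of_mean n t hn ht0 ht1 f aa hexp hmean
    have hcrit := (criterion n t hn ht0 ht1 f aa ha0 hexp).mp heq
    by_cases hone : n = 1
    · subst hone
      refine ⟨aa 1, 0, ?_⟩
      intro k hk
      have hk' := hk
      simp only [mem_Icc] at hk'
      obtain ⟨m, rfl⟩ : ∃ m:ℕ, k = (m:ℤ) := ⟨k.toNat, (Int.toNat_of_nonneg hk'.1).symm⟩
      have hm : m ≤ 1 := by exact_mod_cast hk'.2
      rw [hexp _ hk]
      rw [Finset.sum_range_succ, Finset.sum_range_one, ha0, phi_one 1 t ht1 m hm]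
      push_cast
      ring
    · refine ⟨aa 1, aa n, ?_⟩
      intro k hk
      have hk' := hk
      simp only [mem_Icc] at hk'
      obtain ⟨m, rfl⟩ : ∃ m:ℕ, k = (m:ℤ) := ⟨k.toNat, (Int.toNat_of_nonneg hk'.1).symm⟩
      have hm : m ≤ n := by exact_mod_cast hk'.2
      rw [hexp _ hk]
      have hsub : ({1, n} : Finset ℕ) ⊆ range (n+1) := by
        intro r hr
        simp only [Finset.mem_insert, Finset.mem_singleton] at hr
        simp only [mem_range]
        omega
      have hzero : ∀ r ∈ range (n+1), r ∉ ({1, n} : Finset ℕ) →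
          aa r * phi n t r ((m:ℕ):ℤ) = 0 := by
        intro r hr hrne
        simp only [Finset.mem_insert, Finset.mem_singleton, not_or] at hrne
        simp only [mem_range] at hr
        rcases Nat.eq_zero_or_pos r with rfl | hr0
        · rw [ha0, zero_mul]
        · have : aa r = 0 := hcrit r (by omega) (by omega)
          rw [this, zero_mul]
      rw [← Finset.sum_subset hsub hzero,
        Finset.sum_pair (show (1:ℕ) ≠ n by omega),
        phi_one n t ht1 m hm, phi_top n t ht0 ht1 m hm,
        show (((n:ℕ):ℤ) - ((m:ℕ):ℤ)).toNat = n - m by omega]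
      push_cast
      ring
  · rintro ⟨a, c, hfc⟩
    set aa : ℕ → ℝ := fun r => (if r = 1 then a else 0) + (if r = n then c else 0) with haa
    have ha0 : aa 0 = 0 := by
      simp only [haa]
      rw [if_neg (by omega), if_neg (by omega), add_zero]
    have hexp : ∀ k ∈ Icc (0:ℤ) (n:ℤ), f k = ∑ r ∈ range (n+1), aa r * phi n t r k := by
      intro k hk
      have hk' := hk
      simp only [mem_Icc] at hk'
      obtain ⟨m, rfl⟩ : ∃ m:ℕ, k = (m:ℤ) := ⟨k.toNat, (Int.toNat_of_nonneg hk'.1).symm⟩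
      have hm : m ≤ n := by exact_mod_cast hk'.2
      rw [hfc _ hk]
      have hsplit : ∑ r ∈ range (n+1), aa r * phi n t r ((m:ℕ):ℤ)
          = (∑ r ∈ range (n+1), (if r = 1 then a * phi n t r ((m:ℕ):ℤ) else 0))
            + (∑ r ∈ range (n+1), (if r = n then c * phi n t r ((m:ℕ):ℤ) else 0)) := by
        rw [← Finset.sum_add_distrib]
        refine Finset.sum_congr rfl fun r _ => ?_
        simp only [haa]
        split <;> split <;> ring
      rw [hsplit, Finset.sum_ite_eq' (range (n+1)) 1 (fun r => a * phi n t r ((m:ℕ):ℤ)),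
        Finset.sum_ite_eq' (range (n+1)) n (fun r => c * phi n t r ((m:ℕ):ℤ)),
        if_pos (by simp only [mem_range]; omega), if_pos (by simp only [mem_range]; omega),
        phi_one n t ht1 m hm, phi_top n t ht0 ht1 m hm,
        show (((n:ℕ):ℤ) - ((m:ℕ):ℤ)).toNat = n - m by omega]
      push_cast
      ring
    refine (criterion n t hn ht0 ht1 f aa ha0 hexp).mpr ?_
    intro r h1r hrn
    simp only [haa]
    rw [if_neg (by omega), if_neg (by omega), add_zero]
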